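/- arXiv:1410.4374 — 3 statements merged into one kernel-verified Lean document; each statement's English description precedes it below -/
import Mathlib

section
/- Let G ⊂ SL(3,ℂ) be a nontrivial finite abelian subgroup acting effectively and diagonally, with G_0 = {g ∈ G : F_g^(0) = 0} ≠ G. Then there exists h ∈ G with age a(h) = 1 and F_h^(0) = 1/|G/G_0|. -/
private lemma fract_lo {x : ℝ} (h0 : 0 ≤ x) (h1 : x < 1) : Int.fract x = x :=
  Int.fract_eq_self.2 ⟨h0, h1⟩

private lemma fract_hi {x : ℝ} (h0 : 1 ≤ x) (h1 : x < 2) : Int.fract x = x - 1 := by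
  have h := (Int.fract_sub_intCast x 1).symm
  rw [show ((1:ℤ):ℝ) = 1 by norm_num] at h
  rw [h]
  exact Int.fract_eq_self.2 ⟨by linarith, by linarith⟩

set_option maxHeartbeats 1000000 in
/-- Let `G ⊂ SL(3,ℂ)` be a nontrivial finite abelian group acting effectively and diagonally
via fermionic shifts, with `G_0 = {g | F g 0 = 0} ≠ G`. Then there exists `h ∈ G` with age
`a(h) = 1` and `F h 0 = 1/|G/G_0| = |G_0|/|G|`. -/
theorem exists_age_one_with_minimal_first_shift
    (G : Type*) [AddCommGroup G] [Fintype G] [Nontrivial G]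
    (F : G → Fin 3 → ℝ)
    (hrange : ∀ (g : G) (j : Fin 3), F g j ∈ Set.Ico (0 : ℝ) 1)
    (hadd : ∀ (g h : G) (j : Fin 3), F (g + h) j = Int.fract (F g j + F h j))
    (hdet : ∀ g : G, ∃ z : ℤ, F g 0 + F g 1 + F g 2 = z)
    (heff : ∀ g : G, (∀ j : Fin 3, F g j = 0) → g = 0)
    (hne : ∃ g : G, F g 0 ≠ 0) :
    ∃ h : G, F h 0 + F h 1 + F h 2 = 1 ∧
      F h 0 = (Nat.card {g : G // F g 0 = 0} : ℝ) / (Nat.card G : ℝ) := by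
  classical
  -- F 0 j = 0
  have hF0 : ∀ j : Fin 3, F (0:G) j = 0 := by
    intro j
    have h := hadd 0 0 j
    rw [add_zero] at h
    obtain ⟨h0, h1⟩ := hrange 0 j
    rcases lt_or_ge (F (0:G) j + F (0:G) j) 1 with hx | hx
    · rw [fract_lo (by linarith) hx] at h; linarith
    · rw [fract_hi hx (by linarith)] at h; linarith
  -- sum with negative
  have hneg : ∀ (g : G) (j : Fin 3), F g j + F (-g) j = 0 ∨ F g j + F (-g) j = 1 := by
    intro g j
    have h := hadd g (-g) j
    rw [add_neg_cancel, hF0] at h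
    obtain ⟨h0, h1⟩ := hrange g j
    obtain ⟨h0', h1'⟩ := hrange (-g) j
    rcases lt_or_ge (F g j + F (-g) j) 1 with hx | hx
    · left; rw [fract_lo (by linarith) hx] at h; linarith
    · right; rw [fract_hi hx (by linarith)] at h; linarith
  have hnegpos : ∀ (g : G) (j : Fin 3), F g j ≠ 0 → F (-g) j = 1 - F g j := by
    intro g j hj
    rcases hneg g j with h | h
    · exfalso
      obtain ⟨h0, _⟩ := hrange g j
      obtain ⟨h0', _⟩ := hrange (-g) j
      have : F g j = 0 := by linarith
      exact hj this
    · linarith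
  have hneg0 : ∀ (g : G) (j : Fin 3), F g j = 0 → F (-g) j = 0 := by
    intro g j hj
    rcases hneg g j with h | h
    · linarith
    · exfalso
      obtain ⟨_, h1'⟩ := hrange (-g) j
      linarith
  -- iterated addition
  have hsm : ∀ (k : ℕ) (g : G) (j : Fin 3), ∃ z : ℤ, F (k • g) j = k * F g j - z := by
    intro k
    induction k with
    | zero => intro g j; exact ⟨0, by simp [hF0]⟩
    | succ n ih =>
      intro g j
      obtain ⟨z, hz⟩ := ih g j
      refine ⟨z + ⌊F (n • g) j + F g j⌋, ?_⟩
      rw [succ_nsmul, hadd, ← Int.self_sub_floor]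
      push_cast
      rw [hz]
      ring
  -- rationality
  have hrat : ∀ (g : G) (j : Fin 3), ∃ z : ℤ, (Fintype.card G : ℝ) * F g j = z := by
    intro g j
    obtain ⟨z, hz⟩ := hsm (Fintype.card G) g j
    rw [card_nsmul_eq_zero, hF0] at hz
    exact ⟨z, by linarith⟩
  -- minimal positive value of F · 0
  obtain ⟨g₀, hg₀⟩ := hne
  set S : Finset ℝ :=
    (Finset.univ.image (fun g : G => F g 0)).filter (fun x => 0 < x) with hSdef
  have hSne : S.Nonempty := by
    refine ⟨F g₀ 0, ?_⟩
    rw [hSdef, Finset.mem_filter]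
    constructor
    · exact Finset.mem_image.2 ⟨g₀, Finset.mem_univ _, rfl⟩
    · exact lt_of_le_of_ne (hrange g₀ 0).1 (Ne.symm hg₀)
  set ε : ℝ := S.min' hSne with hεdef
  have hεS : ε ∈ S := S.min'_mem hSne
  have hεpos : 0 < ε := (Finset.mem_filter.1 hεS).2
  obtain ⟨ξ, _, hξ⟩ := Finset.mem_image.1 (Finset.mem_filter.1 hεS).1
  have hε1 : ε < 1 := hξ ▸ (hrange ξ 0).2
  have hεmin : ∀ g : G, F g 0 ≠ 0 → ε ≤ F g 0 := by
    intro g hg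
    apply S.min'_le
    rw [hSdef, Finset.mem_filter]
    exact ⟨Finset.mem_image.2 ⟨g, Finset.mem_univ _, rfl⟩,
      lt_of_le_of_ne (hrange g 0).1 (Ne.symm hg)⟩
  have hnξ : F (-ξ) 0 = 1 - ε := by
    rw [hnegpos ξ 0 (by rw [hξ]; exact ne_of_gt hεpos), hξ]
  -- subtraction step
  have hstep : ∀ g : G, ε ≤ F g 0 → F (g - ξ) 0 = F g 0 - ε := by
    intro g hg
    rw [sub_eq_add_neg, hadd, hnξ]
    rw [fract_hi (by linarith) (by linarith [(hrange g 0).2])]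
    ring
  -- every value is a natural multiple of ε
  have hdiv : ∀ g : G, ∃ k : ℕ, F g 0 = k * ε := by
    have H : ∀ (k : ℕ) (g : G), F g 0 ≤ k * ε → ∃ j : ℕ, F g 0 = j * ε := by
      intro k
      induction k with
      | zero =>
        intro g hg
        refine ⟨0, ?_⟩
        have := (hrange g 0).1
        push_cast
        push_cast at hg
        linarith
      | succ n ih =>
        intro g hg
        rcases lt_or_ge (F g 0) ε with h | h
        · refine ⟨0, ?_⟩
          push_cast
          by_contra hcon
          have hzne : F g 0 ≠ 0 := by
            intro h0; apply hcon; rw [h0]; ring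
          linarith [hεmin g hzne]
        · have hstepg := hstep g h
          obtain ⟨j, hj⟩ := ih (g - ξ) (by push_cast at hg ⊢; linarith)
          refine ⟨j + 1, ?_⟩
          push_cast
          push_cast at hj
          linarith
    intro g
    obtain ⟨k, hk⟩ := exists_nat_ge (1 / ε)
    refine H k g ?_
    have h1 : F g 0 < 1 := (hrange g 0).2
    have : 1 ≤ (k:ℝ) * ε := by
      rw [div_le_iff₀ hεpos] at hk
      linarith
    linarith
  -- ε = 1/q
  obtain ⟨k₀, hk₀⟩ := hdiv (-ξ)
  rw [hnξ] at hk₀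
  set q : ℕ := k₀ + 1 with hqdef
  have hqε : (q : ℝ) * ε = 1 := by rw [hqdef]; push_cast; linarith
  have hq2 : 2 ≤ q := by
    by_contra hcon
    interval_cases q
    · norm_num at hqε
    · rw [Nat.cast_one, one_mul] at hqε; linarith
  have hq2R : (2:ℝ) ≤ (q:ℝ) := by exact_mod_cast hq2
  have hqposR : (0:ℝ) < q := by linarith
  -- multiples of ξ
  have hmul : ∀ m : ℕ, (m:ℝ) * ε < 1 → F (m • ξ) 0 = m * ε := by
    intro m
    induction m with
    | zero => intro _; simpa using hF0 0
    | succ n ih =>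
      intro hlt
      push_cast at hlt
      have hn : (n:ℝ) * ε < 1 := by nlinarith
      have hn0 : (0:ℝ) ≤ (n:ℝ) * ε := by positivity
      rw [succ_nsmul, hadd, ih hn, hξ, fract_lo (by linarith) (by push_cast; linarith)]
      push_cast
      ring
  -- the bijection Fin q × G₀ ≃ G
  set e : Fin q × {g : G // F g 0 = 0} → G := fun p => ((p.1 : ℕ) • ξ) + p.2.1 with hedef
  have hlt1 : ∀ m : Fin q, ((m:ℕ):ℝ) * ε < 1 := by
    intro m
    have hm : ((m:ℕ):ℝ) ≤ (q:ℝ) - 1 := by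
      have := m.isLt
      have : ((m:ℕ):ℝ) + 1 ≤ (q:ℝ) := by exact_mod_cast Nat.succ_le_of_lt this
      linarith
    nlinarith
  have hval : ∀ p, F (e p) 0 = ((p.1 : ℕ) : ℝ) * ε := by
    intro p
    rw [hedef]
    simp only
    rw [hadd, p.2.2, add_zero, hmul _ (hlt1 p.1), fract_lo (by positivity) (hlt1 p.1)]
  have hbij : Function.Bijective e := by
    constructor
    · rintro ⟨m₁, g₁⟩ ⟨m₂, g₂⟩ hp
      have h1 := hval ⟨m₁, g₁⟩
      have h2 := hval ⟨m₂, g₂⟩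
      rw [hp] at h1
      have hm : ((m₁:ℕ):ℝ) = ((m₂:ℕ):ℝ) := by
        have := h1.symm.trans h2
        exact mul_right_cancel₀ (ne_of_gt hεpos) this
      have hmn : (m₁:ℕ) = (m₂:ℕ) := by exact_mod_cast hm
      have hmeq : m₁ = m₂ := Fin.ext hmn
      subst hmeq
      have : ((m₁:ℕ) • ξ) + g₁.1 = ((m₁:ℕ) • ξ) + g₂.1 := hp
      have := add_left_cancel this
      exact Prod.ext rfl (Subtype.ext this)
    · intro g
      obtain ⟨j, hj⟩ := hdiv g
      have hjε1 : (j:ℝ) * ε < 1 := by rw [← hj]; exact (hrange g 0).2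
      have hjq : j < q := by
        by_contra hcon
        push_neg at hcon
        have : (q:ℝ) ≤ (j:ℝ) := by exact_mod_cast hcon
        nlinarith
      have hjv : F ((j:ℕ) • ξ) 0 = j * ε := hmul j hjε1
      have hjnn : (0:ℝ) ≤ (j:ℝ) * ε := by positivity
      have hsub : F (g - (j:ℕ) • ξ) 0 = 0 := by
        rw [sub_eq_add_neg, hadd]
        rcases hneg ((j:ℕ) • ξ) 0 with h0 | h0 <;> rw [hjv] at h0
        · have hnn := (hrange (-((j:ℕ) • ξ)) 0).1
          have hj0 : (j:ℝ) * ε = 0 := by linarith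
          have hn0 : F (-((j:ℕ) • ξ)) 0 = 0 := by linarith
          rw [hj, hj0, hn0, add_zero, Int.fract_zero]
        · have hn1 : F (-((j:ℕ) • ξ)) 0 = 1 - (j:ℝ) * ε := by linarith
          rw [hj, hn1, show (j:ℝ) * ε + (1 - (j:ℝ) * ε) = 1 by ring, Int.fract_one]
      refine ⟨⟨⟨j, hjq⟩, ⟨g - (j:ℕ) • ξ, hsub⟩⟩, ?_⟩
      rw [hedef]
      simp only
      abel
  -- counting
  have hG0ne : Nonempty {g : G // F g 0 = 0} := ⟨⟨0, hF0 0⟩⟩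
  have hcardG : Nat.card G = q * Nat.card {g : G // F g 0 = 0} := by
    rw [← Nat.card_eq_of_bijective e hbij, Nat.card_prod]
    simp
  have hG0pos : 0 < Nat.card {g : G // F g 0 = 0} := Nat.card_pos
  have hεval : ε = (Nat.card {g : G // F g 0 = 0} : ℝ) / (Nat.card G : ℝ) := by
    rw [hcardG]
    push_cast
    rw [eq_div_iff (by positivity)]
    have : (Nat.card {g : G // F g 0 = 0} : ℝ) > 0 := by exact_mod_cast hG0pos
    nlinarith [hqε]
  -- Step B: minimize F · 1 over the coset {g | F g 0 = ε}
  set C : Finset G := Finset.univ.filter (fun g => F g 0 = ε) with hCdef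
  have hCne : C.Nonempty := ⟨ξ, by rw [hCdef]; exact Finset.mem_filter.2 ⟨Finset.mem_univ _, hξ⟩⟩
  obtain ⟨h, hhC, hhmin⟩ := Finset.exists_min_image C (fun g => F g 1) hCne
  have hh0 : F h 0 = ε := (Finset.mem_filter.1 hhC).2
  obtain ⟨z, hz⟩ := hdet h
  have hz1 : (1:ℤ) ≤ z := by
    have : (0:ℝ) < (z:ℝ) := by
      rw [← hz, hh0]
      have := (hrange h 1).1
      have := (hrange h 2).1
      linarith
    have hz0 : (0:ℤ) < z := by exact_mod_cast this
    omega
  have hz2 : z ≤ 2 := by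
    have : (z:ℝ) < 3 := by
      rw [← hz]
      have := (hrange h 0).2
      have := (hrange h 1).2
      have := (hrange h 2).2
      linarith
    have : z < 3 := by exact_mod_cast this
    omega
  rcases eq_or_lt_of_le hz1 with hz1' | hz1'
  · -- age 1 : done
    have hz1'' : z = 1 := hz1'.symm
    refine ⟨h, by rw [hz, hz1'']; norm_num, by rw [hh0, hεval]⟩
  · -- age 2 : contradiction
    exfalso
    have hzeq : z = 2 := by omega
    rw [hzeq] at hz
    push_cast at hz
    have hh1lb : 1 - ε < F h 1 := by
      have := (hrange h 2).2
      linarith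
    have hh1ub : F h 1 < 1 := (hrange h 1).2
    by_cases hG0 : ∀ g : G, F g 0 = 0 → g = 0
    · -- G₀ trivial: rationality contradiction
      have hcard1 : Nat.card {g : G // F g 0 = 0} = 1 := by
        rw [Nat.card_eq_one_iff_unique]
        constructor
        · constructor
          rintro ⟨a, ha⟩ ⟨b, hb⟩
          exact Subtype.ext ((hG0 a ha).trans (hG0 b hb).symm)
        · exact hG0ne
      have hcardq : Fintype.card G = q := by
        rw [← Nat.card_eq_fintype_card, hcardG, hcard1, mul_one]
      obtain ⟨w, hw⟩ := hrat h 1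
      rw [hcardq] at hw
      have hub : (w:ℝ) < (q:ℝ) := by rw [← hw]; nlinarith
      have hlb : (q:ℝ) - 1 < (w:ℝ) := by rw [← hw]; nlinarith [hqε]
      have hubz : w < (q:ℤ) := by exact_mod_cast hub
      have hlbz : (q:ℤ) - 1 < w := by exact_mod_cast hlb
      omega
    · -- G₀ nontrivial
      push_neg at hG0
      obtain ⟨g, hg0, hgne⟩ := hG0
      have hg1pos : 0 < F g 1 := by
        rcases lt_or_eq_of_le (hrange g 1).1 with h' | h'
        · exact h'
        · exfalso
          obtain ⟨w, hw⟩ := hdet g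
          have hw0 : (w:ℝ) = F g 2 := by rw [← hw, hg0, ← h']; ring
          have : F g 2 = 0 := by
            have h2a := (hrange g 2).1
            have h2b := (hrange g 2).2
            have : (0:ℤ) ≤ w := by exact_mod_cast hw0 ▸ h2a
            have : w < 1 := by exact_mod_cast hw0 ▸ h2b
            have : w = 0 := by omega
            rw [← hw0, this]; norm_num
          apply hgne
          apply heff
          intro j
          fin_cases j
          · exact hg0
          · exact h'.symm
          · exact this
      have hg1lt : F g 1 < 1 := (hrange g 1).2
      have key : ∀ g' : G, F g' 0 = 0 → F g' 1 < 1 → F g' 1 < ε := by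
        intro g' hg'0 hg'1
        have hmem : h + g' ∈ C := by
          rw [hCdef]
          refine Finset.mem_filter.2 ⟨Finset.mem_univ _, ?_⟩
          rw [hadd, hg'0, add_zero, hh0, fract_lo (le_of_lt hεpos) hε1]
        have hge := hhmin (h + g') hmem
        rw [hadd] at hge
        rcases lt_or_ge (F h 1 + F g' 1) 1 with hx | hx
        · -- no wrap: F g' 1 < 1 - F h 1 < ε  (need strict?)
          linarith
        · exfalso
          have hnn1 := (hrange g' 1).1
          rw [fract_hi hx (by linarith)] at hge
          linarith
      have hkg := key g hg0 hg1lt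
      have hng0 : F (-g) 0 = 0 := hneg0 g 0 hg0
      have hng1 : F (-g) 1 = 1 - F g 1 := hnegpos g 1 hg1pos.ne'
      have hng1lt : F (-g) 1 < 1 := (hrange (-g) 1).2
      have hkng := key (-g) hng0 hng1lt
      rw [hng1] at hkng
      have hεhalf : ε ≤ 1/2 := by nlinarith [hqε]
      linarith
end

section
/- For integers n ≥ 0 and n' arbitrary, with the convention Γ(z_1)/Γ(z_2) := lim_{x→0} Γ(x+z_1)/Γ(x+z_2), one has Γ(1+n')/Γ(−n) = (−1)^{n+n'+1} · Γ(1+n)/Γ(−n'). -/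
open Filter Topology Complex Nat

lemma aux_tendsto (a b : ℂ) (ha : ∀ m : ℕ, a ≠ -m) :
    Tendsto (fun x : ℂ => Gamma (x + a) / Gamma (x + b)) (𝓝[≠] (0 : ℂ))
      (𝓝 (Gamma a * (Gamma b)⁻¹)) := by
  have hadd : ∀ c : ℂ, Tendsto (fun x : ℂ => x + c) (𝓝 0) (𝓝 c) := by
    intro c
    simpa using (continuous_add_right c).tendsto (0 : ℂ)
  have h1 : Tendsto (fun x : ℂ => Gamma (x + a)) (𝓝 0) (𝓝 (Gamma a)) :=
    ((Complex.differentiableAt_Gamma a ha).continuousAt.tendsto).comp (hadd a)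
  have h2 : Tendsto (fun x : ℂ => (Gamma (x + b))⁻¹) (𝓝 0) (𝓝 ((Gamma b)⁻¹)) :=
    (Complex.differentiable_one_div_Gamma b).continuousAt.tendsto.comp (hadd b)
  have : Tendsto (fun x : ℂ => Gamma (x + a) * (Gamma (x + b))⁻¹) (𝓝[≠] (0:ℂ))
      (𝓝 (Gamma a * (Gamma b)⁻¹)) := (h1.mul h2).mono_left nhdsWithin_le_nhds
  simpa [div_eq_mul_inv] using this

lemma aux_key (k : ℕ) (x : ℂ) (hx : ∀ j : ℕ, x ≠ j) :
    Gamma x = Gamma (x - k) * ∏ j ∈ Finset.range k, (x - (j + 1)) := by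
  induction k with
  | zero => simp
  | succ k ih =>
    have hne : x - (k + 1 : ℂ) ≠ 0 := by
      intro h
      exact hx (k + 1) (by push_cast; linear_combination h)
    have h1 : Gamma (x - k) = (x - (k + 1 : ℂ)) * Gamma (x - (k + 1 : ℂ)) := by
      have := Complex.Gamma_add_one (x - (k + 1 : ℂ)) hne
      rw [← this]; ring_nf
    rw [ih, h1, Finset.prod_range_succ]
    push_cast
    ring

lemma aux_prod_zero (k : ℕ) :
    ∏ j ∈ Finset.range k, ((0 : ℂ) - (j + 1)) = (-1) ^ k * (k ! : ℂ) := by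
  induction k with
  | zero => simp
  | succ k ih =>
    rw [Finset.prod_range_succ, ih, Nat.factorial_succ]
    push_cast
    ring

lemma aux_nat_ne (a : ℕ) (j : ℕ) : ((a : ℂ) + 1) ≠ -j := by
  intro h
  have h0 : ((a + 1 + j : ℕ) : ℂ) = 0 := by push_cast; linear_combination h
  have : (a + 1 + j : ℕ) = 0 := by exact_mod_cast h0
  omega

/-- For `n ∈ ℤ_{≥0}` and `n' ∈ ℤ`, with the convention
`Γ(z₁)/Γ(z₂) := lim_{x→0} Γ(x+z₁)/Γ(x+z₂)`, one has
`Γ(1+n')/Γ(−n) = (−1)^{n+n'+1} · Γ(1+n)/Γ(−n')`. -/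
theorem gamma_ratio_convention_identity (n : ℕ) (n' : ℤ) :
    ∃ L M : ℂ,
      Tendsto (fun x : ℂ => Complex.Gamma (x + ((1 + n' : ℤ) : ℂ)) /
          Complex.Gamma (x + (-(n : ℂ)))) (𝓝[≠] (0 : ℂ)) (𝓝 L) ∧
      Tendsto (fun x : ℂ => Complex.Gamma (x + (1 + (n : ℂ))) /
          Complex.Gamma (x + (-(n' : ℂ)))) (𝓝[≠] (0 : ℂ)) (𝓝 M) ∧
      L = (-1 : ℂ) ^ ((n : ℤ) + n' + 1) * M := by
  have hM1 : ∀ j : ℕ, (1 : ℂ) + n ≠ -j := by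
    intro j
    have := aux_nat_ne n j
    intro h; exact this (by linear_combination h)
  rcases le_or_gt 0 n' with hn' | hn'
  · -- n' = k ≥ 0 : both limits are 0
    obtain ⟨k, rfl⟩ := Int.eq_ofNat_of_zero_le hn'
    refine ⟨0, 0, ?_, ?_, by ring⟩
    · have ha : ∀ j : ℕ, ((1 + (k : ℤ) : ℤ) : ℂ) ≠ -j := by
        intro j
        have := aux_nat_ne k j
        intro h; exact this (by push_cast at h ⊢; linear_combination h)
      have := aux_tendsto ((1 + (k : ℤ) : ℤ) : ℂ) (-(n : ℂ)) ha
      simpa [Complex.Gamma_neg_nat_eq_zero] using this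
    · have h2 : Gamma (-((k : ℤ) : ℂ)) = 0 := by
        have := Complex.Gamma_neg_nat_eq_zero k
        simpa using this
      have := aux_tendsto ((1 : ℂ) + n) (-((k : ℤ) : ℂ)) hM1
      rw [h2, inv_zero, mul_zero] at this
      exact this
  · -- n' = -(m+1)
    obtain ⟨m, rfl⟩ : ∃ m : ℕ, n' = -((m : ℤ) + 1) := ⟨(-n' - 1).toNat, by omega⟩
    -- the M limit
    have hMcast : (-((-((m : ℤ) + 1) : ℤ) : ℂ)) = (m : ℂ) + 1 := by push_cast; ring
    have hM : Tendsto (fun x : ℂ => Complex.Gamma (x + (1 + (n : ℂ))) /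
        Complex.Gamma (x + (-((-((m : ℤ) + 1) : ℤ) : ℂ)))) (𝓝[≠] (0 : ℂ))
        (𝓝 ((n ! : ℂ) * ((m ! : ℂ))⁻¹)) := by
      have := aux_tendsto ((1 : ℂ) + n) ((m : ℂ) + 1) hM1
      rw [hMcast]
      have e1 : Gamma ((1 : ℂ) + n) = (n ! : ℂ) := by
        rw [add_comm]; exact Complex.Gamma_nat_eq_factorial n
      have e2 : Gamma ((m : ℂ) + 1) = (m ! : ℂ) := Complex.Gamma_nat_eq_factorial m
      rwa [e1, e2] at this
    -- the L limit
    set P : ℕ → ℂ → ℂ := fun k x => ∏ j ∈ Finset.range k, (x - (j + 1)) with hP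
    have hPcont : ∀ k : ℕ, Continuous (P k) := by
      intro k
      exact continuous_finset_prod _ fun j _ => continuous_id.sub continuous_const
    have hP0 : ∀ k : ℕ, P k 0 = (-1) ^ k * (k ! : ℂ) := fun k => aux_prod_zero k
    have hPm0 : P m 0 ≠ 0 := by
      rw [hP0]
      refine mul_ne_zero (pow_ne_zero _ (by norm_num)) ?_
      exact_mod_cast (Nat.factorial_pos m).ne'
    have hLcast : (((1 + -((m : ℤ) + 1) : ℤ) : ℂ)) = -(m : ℂ) := by push_cast; ring
    have hL : Tendsto (fun x : ℂ => Complex.Gamma (x + ((1 + -((m : ℤ) + 1) : ℤ) : ℂ)) /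
        Complex.Gamma (x + (-(n : ℂ)))) (𝓝[≠] (0 : ℂ)) (𝓝 (P n 0 / P m 0)) := by
      have htend : Tendsto (fun x : ℂ => P n x / P m x) (𝓝[≠] (0 : ℂ)) (𝓝 (P n 0 / P m 0)) :=
        (((hPcont n).tendsto 0).div ((hPcont m).tendsto 0) hPm0).mono_left nhdsWithin_le_nhds
      refine htend.congr' ?_
      have hball : ∀ᶠ x : ℂ in 𝓝[≠] (0 : ℂ), ‖x‖ < 1 := by
        apply eventually_nhdsWithin_of_eventually_nhds
        have : Metric.ball (0 : ℂ) 1 ∈ 𝓝 (0 : ℂ) := Metric.ball_mem_nhds _ one_pos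
        filter_upwards [this] with x hx
        simpa [Metric.mem_ball] using hx
      filter_upwards [hball, self_mem_nhdsWithin] with x hx1 hx0
      have hxj : ∀ j : ℕ, x ≠ j := by
        intro j h
        rcases Nat.eq_zero_or_pos j with hj | hj
        · exact hx0 (by simp [hj] at h; simpa [Set.mem_compl_iff] using h)
        · rw [h] at hx1
          have : (1 : ℝ) ≤ j := by exact_mod_cast hj
          simp only [Complex.norm_natCast] at hx1
          linarith
      have hxGamma : Gamma x ≠ 0 := by
        refine Complex.Gamma_ne_zero fun j h => ?_
        rcases Nat.eq_zero_or_pos j with hj | hj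
        · exact hx0 (by simp [hj] at h; simpa [Set.mem_compl_iff] using h)
        · rw [h] at hx1
          have : (1 : ℝ) ≤ j := by exact_mod_cast hj
          simp only [norm_neg, Complex.norm_natCast] at hx1
          linarith
      have hPne : ∀ k : ℕ, P k x ≠ 0 := by
        intro k
        refine Finset.prod_ne_zero_iff.mpr fun j _ => ?_
        intro h
        have hxe : x = ((j + 1 : ℕ) : ℂ) := by push_cast; linear_combination h
        exact hxj (j + 1) hxe
      have hkn : Gamma x = Gamma (x - (n : ℂ)) * P n x := aux_key n x hxj
      have hkm : Gamma x = Gamma (x - (m : ℂ)) * P m x := aux_key m x hxj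
      have e1 : x + ((1 + -((m : ℤ) + 1) : ℤ) : ℂ) = x - m := by push_cast; ring
      have e2 : x + (-(n : ℂ)) = x - n := by ring
      rw [e1, e2]
      have hGm : Gamma (x - m) ≠ 0 := fun h => hxGamma (by rw [hkm, h, zero_mul])
      have hGn : Gamma (x - n) ≠ 0 := fun h => hxGamma (by rw [hkn, h, zero_mul])
      rw [div_eq_div_iff (hPne m) hGn]
      linear_combination hkm - hkn
    refine ⟨P n 0 / P m 0, (n ! : ℂ) * ((m ! : ℂ))⁻¹, hL, hM, ?_⟩
    rw [hP0, hP0]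
    have hfm : ((m ! : ℂ)) ≠ 0 := by exact_mod_cast (Nat.factorial_pos m).ne'
    have hexp : ((n : ℤ) + -((m : ℤ) + 1) + 1) = (n : ℤ) - m := by ring
    rw [hexp, zpow_sub₀ (by norm_num : (-1 : ℂ) ≠ 0), zpow_natCast, zpow_natCast]
    field_simp
end

section
/- Let G be a finite abelian subgroup of SL(3,ℂ) with fermionic shifts F_g^(j), let G_s = {g ∈ G : a(g)=1}, and let l_j, l_g (g ∈ G_s) ∈ ℝ^s satisfy ∑_{g∈G_s} F_g^(j) l_g + l_j = 0 for j=0,1,2. If m ∈ ℤ^s_{≥0} satisfies ⟨m, l_0⟩ < 0 and ⟨m, l_i⟩ ≥ 0 for all i ∈ S∖{0}, then there is a contradiction: no such m exists. (Lemma: if i ∈ {0,1,2} and ⟨m, l_i⟩ < 0 then ∏_{i'≠i} 1/Γ(1+⟨m,l_{i'}⟩) = 0, i.e. some ⟨m,l_{i'}⟩ is a negative integer.) -/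
/-- (Lemma `Frobenius lemma 5` abstraction.) Index `S = {0,1,2} ⊔ G_s` with vectors
`l i ∈ ℝ^s`, relations `∑_{g ∈ G_s} F g j • l (inr g) + l (inl j) = 0` for `j = 0,1,2`,
where `F g j ∈ ℚ ∩ [0,1)` with `F g 0 + F g 1 + F g 2 = 1` for `g ∈ G_s`, and all pairings
`⟨m, l i⟩` integral. Then no `m ∈ ℤ^s_{≥0}` can satisfy `⟨m, l (inl 0)⟩ < 0` while
`⟨m, l i⟩ ≥ 0` for every other index `i`. -/
theorem no_nonneg_vector_with_negative_l0_pairing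
    (s : ℕ) (ι : Type*) [Fintype ι]
    (F : ι → Fin 3 → ℚ)
    (hrange : ∀ (g : ι) (j : Fin 3), 0 ≤ F g j ∧ F g j < 1)
    (hage : ∀ g : ι, F g 0 + F g 1 + F g 2 = 1)
    (l : (Fin 3 ⊕ ι) → Fin s → ℝ)
    (hrel : ∀ (j : Fin 3) (k : Fin s),
      (∑ g : ι, (F g j : ℝ) * l (Sum.inr g) k) + l (Sum.inl j) k = 0)
    (hint : ∀ (m : Fin s → ℤ) (i : Fin 3 ⊕ ι), ∃ z : ℤ, ∑ k : Fin s, (m k : ℝ) * l i k = z)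
    (m : Fin s → ℤ) (hm : ∀ k, 0 ≤ m k)
    (hneg : ∑ k : Fin s, (m k : ℝ) * l (Sum.inl 0) k < 0)
    (hpos : ∀ i : Fin 3 ⊕ ι, i ≠ Sum.inl 0 → 0 ≤ ∑ k : Fin s, (m k : ℝ) * l i k) :
    False := by
  classical
  set p : (Fin 3 ⊕ ι) → ℝ := fun i => ∑ k : Fin s, (m k : ℝ) * l i k with hp
  have key : ∀ j : Fin 3, (∑ g : ι, (F g j : ℝ) * p (Sum.inr g)) + p (Sum.inl j) = 0 := by
    intro j
    have h1 : ∀ g : ι, (F g j : ℝ) * p (Sum.inr g)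
        = ∑ k : Fin s, (m k : ℝ) * ((F g j : ℝ) * l (Sum.inr g) k) := by
      intro g
      simp only [hp, Finset.mul_sum]
      exact Finset.sum_congr rfl fun k _ => by ring
    simp only [h1]
    simp only [hp]
    rw [Finset.sum_comm, ← Finset.sum_add_distrib]
    have : ∀ k : Fin s, (∑ g : ι, (m k : ℝ) * ((F g j : ℝ) * l (Sum.inr g) k))
        + (m k : ℝ) * l (Sum.inl j) k
        = (m k : ℝ) * ((∑ g : ι, (F g j : ℝ) * l (Sum.inr g) k) + l (Sum.inl j) k) := by
      intro k
      rw [mul_add, Finset.mul_sum]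
    simp only [this, hrel, mul_zero, Finset.sum_const_zero]
  have pg0 : ∀ g : ι, 0 ≤ p (Sum.inr g) := fun g => hpos (Sum.inr g) (by simp)
  have term0 : ∀ (j : Fin 3) (g : ι), 0 ≤ (F g j : ℝ) * p (Sum.inr g) := by
    intro j g
    exact mul_nonneg (by exact_mod_cast (hrange g j).1) (pg0 g)
  have hzero : ∀ j : Fin 3, j ≠ 0 → ∀ g : ι, (F g j : ℝ) * p (Sum.inr g) = 0 := by
    intro j hj g
    have hnn : 0 ≤ p (Sum.inl j) := hpos (Sum.inl j) (by simpa using hj)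
    have hsum : ∑ g : ι, (F g j : ℝ) * p (Sum.inr g) = 0 := by
      have := key j
      have h2 : ∑ g : ι, (F g j : ℝ) * p (Sum.inr g) ≤ 0 := by linarith
      have h3 : 0 ≤ ∑ g : ι, (F g j : ℝ) * p (Sum.inr g) :=
        Finset.sum_nonneg fun g _ => term0 j g
      linarith
    exact (Finset.sum_eq_zero_iff_of_nonneg fun g _ => term0 j g).mp hsum g (Finset.mem_univ g)
  -- sum of p over G_s is positive
  have h0 : ∑ g : ι, (F g 0 : ℝ) * p (Sum.inr g) = - p (Sum.inl 0) := by
    have := key 0; linarith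
  have hpossum : 0 < ∑ g : ι, p (Sum.inr g) := by
    have heq : ∀ g : ι, p (Sum.inr g) = (F g 0 : ℝ) * p (Sum.inr g) := by
      intro g
      have h1 := hzero 1 (by decide) g
      have h2 := hzero 2 (by decide) g
      have hs : (F g 0 : ℝ) + F g 1 + F g 2 = 1 := by exact_mod_cast hage g
      nlinarith [pg0 g]
    calc (0:ℝ) < - p (Sum.inl 0) := by simpa [hp] using hneg
      _ = ∑ g : ι, (F g 0 : ℝ) * p (Sum.inr g) := h0.symm
      _ = ∑ g : ι, p (Sum.inr g) := Finset.sum_congr rfl fun g _ => (heq g).symm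
  obtain ⟨g, -, hg⟩ := Finset.exists_lt_of_sum_lt (f := fun _ : ι => (0:ℝ))
    (by simpa using hpossum)
  have hg' : 0 < p (Sum.inr g) := hg
  have h1 := hzero 1 (by decide) g
  have h2 := hzero 2 (by decide) g
  have hF1 : (F g 1 : ℝ) = 0 := by
    rcases mul_eq_zero.mp h1 with h | h
    · exact h
    · exact absurd h hg'.ne'
  have hF2 : (F g 2 : ℝ) = 0 := by
    rcases mul_eq_zero.mp h2 with h | h
    · exact h
    · exact absurd h hg'.ne'
  have hs : (F g 0 : ℝ) + F g 1 + F g 2 = 1 := by exact_mod_cast hage g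
  have := (hrange g 0).2
  have : (F g 0 : ℝ) < 1 := by exact_mod_cast this
  linarith
end
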